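/- Let C be a Minkowski centered convex body in ℝ^n such that C ∩ (−C) is optimally contained in conv(C ∪ (−C)). Then for every s ∈ [1, s(C)] there exists a Minkowski centered convex body C_s in ℝ^n with s(C_s) = s such that C_s ∩ (−C_s) is optimally contained in conv(C_s ∪ (−C_s)). -/

import Mathlib

open Pointwise RealInnerProductSpace

variable {E : Type*} [NormedAddCommGroup E] [InnerProductSpace ℝ E]

/-- `K` is optimally contained in `C`: `K ⊆ C` and there is no `ρ ∈ [0,1)` and
translation `t` with `K ⊆ ρ • C + {t}`. -/
def OptCont (K C : Set E) : Prop :=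
  K ⊆ C ∧ ¬∃ ρ : ℝ, 0 ≤ ρ ∧ ρ < 1 ∧ ∃ t : E, K ⊆ ρ • C + {t}

/-- The polar set `C° = {a | ∀ x ∈ C, ⟪a,x⟫ ≤ 1}`. -/
def polarSet (C : Set E) : Set E := {a : E | ∀ x ∈ C, ⟪a, x⟫ ≤ 1}

/-- The Minkowski asymmetry of `C`. -/
noncomputable def minkAsym (C : Set E) : ℝ :=
  sInf {ρ : ℝ | 0 < ρ ∧ ∃ c : E, C - {c} ⊆ ρ • ({c} - C)}

/-- `C` is Minkowski centered if `C ⊆ s(C) • (-C)`. -/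
def MinkCentered (C : Set E) : Prop := C ⊆ minkAsym C • (-C)

private lemma aux_vec {V : Type*} [AddCommGroup V] [Module ℝ V]
    {μ ρ : ℝ} (hμ : μ ≠ 0) (hden : μ + ρ ≠ 0) (x y c : V)
    (he : μ • x - c = ρ • (c - y)) :
    (ρ/μ) • (((1+ρ)/(μ+ρ)) • c - y) = x - ((1+ρ)/(μ+ρ)) • c := by
  have hx : x = (μ⁻¹ * (1+ρ)) • c - (μ⁻¹ * ρ) • y := by
    have h1 : μ • x = (1+ρ) • c - ρ • y := by
      have h2 := sub_eq_iff_eq_add'.mp he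
      rw [h2, smul_sub, add_smul, one_smul]
      abel
    have h3 := congrArg (fun v => μ⁻¹ • v) h1
    simpa [smul_smul, smul_sub, inv_mul_cancel₀ hμ] using h3
  rw [hx]
  match_scalars
  · field_simp
    ring
  · field_simp

theorem stmt_19 {n : ℕ} (C : Set (EuclideanSpace ℝ (Fin n)))
    (hcomp : IsCompact C) (hconv : Convex ℝ C) (hint : (interior C).Nonempty)
    (hmc : MinkCentered C)
    (hopt : OptCont (C ∩ -C) (convexHull ℝ (C ∪ -C))) :
    ∀ s : ℝ, 1 ≤ s → s ≤ minkAsym C →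
      ∃ Cs : Set (EuclideanSpace ℝ (Fin n)), IsCompact Cs ∧ Convex ℝ Cs ∧
        (interior Cs).Nonempty ∧ MinkCentered Cs ∧ minkAsym Cs = s ∧
        OptCont (Cs ∩ -Cs) (convexHull ℝ (Cs ∪ -Cs)) := by
  intro s hs1 hs2
  set σ := minkAsym C with hσdef
  have hσ1 : (1:ℝ) ≤ σ := le_trans hs1 hs2
  have hσ0 : (0:ℝ) < σ := by linarith
  have hs0 : (0:ℝ) < s := by linarith
  have hσne : σ ≠ 0 := ne_of_gt hσ0
  have hsne : s ≠ 0 := ne_of_gt hs0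
  -- from Minkowski centeredness : x ∈ C → -(σ⁻¹) • x ∈ C
  have hnegC : ∀ x ∈ C, (-(σ⁻¹)) • x ∈ C := by
    intro x hx
    obtain ⟨y, hy, hxy⟩ := hmc hx
    have hy' : -y ∈ C := Set.mem_neg.mp hy
    have : (-(σ⁻¹)) • x = -y := by
      rw [← hxy, smul_smul]
      field_simp
      rw [← hσdef, div_self hσne, neg_smul, one_smul]
    rwa [this]
  -- 0 ∈ C
  obtain ⟨x₀, hx₀⟩ := hint
  have hx₀C : x₀ ∈ C := interior_subset hx₀
  have h0C : (0 : EuclideanSpace ℝ (Fin n)) ∈ C := by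
    have hcomb := hconv hx₀C (hnegC x₀ hx₀C)
      (a := 1/(1+σ)) (b := σ/(1+σ)) (by positivity) (by positivity)
      (by field_simp)
    have : (1/(1+σ)) • x₀ + (σ/(1+σ)) • ((-(σ⁻¹)) • x₀)
        = (0 : EuclideanSpace ℝ (Fin n)) := by
      rw [smul_smul, ← add_smul]
      have : 1/(1+σ) + σ/(1+σ) * -σ⁻¹ = 0 := by field_simp; ring
      rw [this, zero_smul]
    rwa [this] at hcomb
  -- shrinking C stays in C
  have hshrink : ∀ t : ℝ, 0 ≤ t → t ≤ 1 → ∀ x ∈ C, t • x ∈ C := by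
    intro t ht0 ht1 x hx
    have := hconv hx h0C ht0 (by linarith : (0:ℝ) ≤ 1 - t) (by ring)
    simpa using this
  set Cs : Set (EuclideanSpace ℝ (Fin n)) := C ∩ s • (-C) with hCs
  -- basic membership characterization for s • (-C)
  have hmemsC : ∀ x : EuclideanSpace ℝ (Fin n), x ∈ s • (-C) ↔ (-(s⁻¹)) • x ∈ C := by
    intro x
    constructor
    · rintro ⟨y, hy, rfl⟩
      have : (-(s⁻¹)) • s • y = -y := by rw [smul_smul]; field_simp; simp
      rw [this]
      exact Set.mem_neg.mp hy
    · intro h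
      refine ⟨(s⁻¹) • x, ?_, ?_⟩
      · rw [Set.mem_neg]
        have : -((s⁻¹) • x) = (-(s⁻¹)) • x := by rw [neg_smul]
        rwa [this]
      · show s • s⁻¹ • x = x
        rw [smul_smul]; field_simp; simp
  -- 0 ∈ Cs
  have h0Cs : (0 : EuclideanSpace ℝ (Fin n)) ∈ Cs := by
    refine ⟨h0C, ?_⟩
    rw [hmemsC, smul_zero]
    exact h0C
  -- (s/σ) • C ⊆ Cs
  have hμ : ∀ x ∈ C, (s/σ) • x ∈ Cs := by
    intro x hx
    constructor
    · exact hshrink _ (by positivity) (by rw [div_le_one hσ0]; exact hs2) x hx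
    · rw [hmemsC, smul_smul]
      have : -s⁻¹ * (s/σ) = -(σ⁻¹) := by field_simp
      rw [this]
      exact hnegC x hx
  -- Cs ⊆ s • (-Cs)
  have hsub : Cs ⊆ s • (-Cs) := by
    rintro x ⟨hxC, hxs⟩
    refine ⟨(s⁻¹) • x, ?_, by show s • s⁻¹ • x = x; rw [smul_smul]; field_simp; simp⟩
    rw [Set.mem_neg]
    constructor
    · have := (hmemsC x).mp hxs
      rwa [neg_smul] at this
    · rw [hmemsC]
      have hx2 : (s⁻¹ * s⁻¹) • x ∈ C := by
        have h1 : (0:ℝ) ≤ s⁻¹ * s⁻¹ := by positivity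
        have h2 : s⁻¹ * s⁻¹ ≤ 1 := by
          rw [← one_div, div_mul_div_comm]
          rw [div_le_one (by positivity)]
          nlinarith
        exact hshrink _ h1 h2 x hxC
      have heq : (-(s⁻¹)) • -((s⁻¹) • x) = (s⁻¹ * s⁻¹) • x := by
        rw [smul_neg, neg_smul, neg_neg, smul_smul]
      rwa [heq]
  -- the asymmetry set of Cs
  set S : Set ℝ := {ρ : ℝ | 0 < ρ ∧ ∃ c : EuclideanSpace ℝ (Fin n),
      Cs - {c} ⊆ ρ • ({c} - Cs)} with hSdef
  have hSbdd : BddBelow S := ⟨0, fun ρ hρ => le_of_lt hρ.1⟩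
  -- s ∈ S (with center 0)
  have hmemS : s ∈ S := by
    refine ⟨hs0, 0, ?_⟩
    intro a ha
    rw [Set.mem_sub] at ha
    obtain ⟨x, hx, y, hy, hxy⟩ := ha
    rw [Set.mem_singleton_iff] at hy
    subst hy
    obtain ⟨w, hw, hws⟩ := hsub hx
    rw [Set.mem_neg] at hw
    refine ⟨0 - (-w), ?_, ?_⟩
    · rw [Set.mem_sub]
      exact ⟨0, rfl, -w, hw, rfl⟩
    · rw [← hxy, sub_zero, ← hws]
      rw [zero_sub, neg_neg]
  -- lower bound: any ρ ∈ S satisfies s ≤ ρ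
  have hlow : ∀ ρ ∈ S, s ≤ ρ := by
    rintro ρ ⟨hρ0, c, hc⟩
    set μ : ℝ := s/σ with hμdef
    have hμ0 : (0:ℝ) < μ := by positivity
    have hden : μ + ρ ≠ 0 := by positivity
    set c' : EuclideanSpace ℝ (Fin n) := ((1+ρ)/(μ+ρ)) • c with hc'def
    set ρ' : ℝ := ρ * σ / s with hρ'def
    have hρ'0 : (0:ℝ) < ρ' := by positivity
    have hkey : C - {c'} ⊆ ρ' • ({c'} - C) := by
      intro a ha
      rw [Set.mem_sub] at ha
      obtain ⟨x, hx, z, hz, hxz⟩ := ha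
      rw [Set.mem_singleton_iff] at hz
      have hx' : μ • x ∈ Cs := hμ x hx
      have hmem : μ • x - c ∈ Cs - {c} := by
        rw [Set.mem_sub]; exact ⟨μ • x, hx', c, rfl, rfl⟩
      obtain ⟨w, hw, hwe⟩ := hc hmem
      rw [Set.mem_sub] at hw
      obtain ⟨cc, hcc, y, hy, hccy⟩ := hw
      rw [Set.mem_singleton_iff] at hcc
      have hyC : y ∈ C := hy.1
      have he : μ • x - c = ρ • (c - y) := by
        rw [hcc] at hccy
        rw [hccy]
        exact hwe.symm
      have hρ'eq : ρ' = ρ/μ := by rw [hρ'def, hμdef]; field_simp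
      refine ⟨c' - y, ?_, ?_⟩
      · rw [Set.mem_sub]; exact ⟨c', rfl, y, hyC, rfl⟩
      · show ρ' • (c' - y) = a
        rw [← hxz, hz, hρ'eq, hc'def]
        exact aux_vec (ne_of_gt hμ0) hden x y c he
    have hρ'S : ρ' ∈ {ρ : ℝ | 0 < ρ ∧ ∃ c : EuclideanSpace ℝ (Fin n),
        C - {c} ⊆ ρ • ({c} - C)} := ⟨hρ'0, c', hkey⟩
    have hbddC : BddBelow {ρ : ℝ | 0 < ρ ∧ ∃ c : EuclideanSpace ℝ (Fin n),
        C - {c} ⊆ ρ • ({c} - C)} := ⟨0, fun ρ hρ => le_of_lt hρ.1⟩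
    have hσle : σ ≤ ρ' := by
      rw [hσdef]
      exact csInf_le hbddC hρ'S
    rw [hρ'def] at hσle
    have h2 := (le_div_iff₀ hs0).mp hσle
    nlinarith
  -- asymmetry of Cs equals s
  have hasym : minkAsym Cs = s := by
    rw [minkAsym, ← hSdef]
    exact le_antisymm (csInf_le hSbdd hmemS) (le_csInf ⟨s, hmemS⟩ hlow)
  -- compactness
  have hcomps : IsCompact Cs := by
    apply hcomp.inter_right
    have : IsCompact (s • (-C)) := (hcomp.neg).smul s
    exact this.isClosed
  -- convexity
  have hconvs : Convex ℝ Cs := by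
    apply hconv.inter
    exact (hconv.neg).smul s
  -- interior
  have hints : (interior Cs).Nonempty := by
    have h0int : (0 : EuclideanSpace ℝ (Fin n)) ∈ interior C := by
      have := hconv.combo_interior_self_mem_interior hx₀ (hnegC x₀ hx₀C)
        (a := 1/(1+σ)) (b := σ/(1+σ)) (by positivity) (by positivity) (by field_simp)
      have heq : (1/(1+σ)) • x₀ + (σ/(1+σ)) • ((-(σ⁻¹)) • x₀)
          = (0 : EuclideanSpace ℝ (Fin n)) := by
        rw [smul_smul, ← add_smul]
        have : 1/(1+σ) + σ/(1+σ) * -σ⁻¹ = 0 := by field_simp; ring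
        rw [this, zero_smul]
      rwa [heq] at this
    refine ⟨0, ?_⟩
    rw [hCs, interior_inter]
    refine ⟨h0int, ?_⟩
    rw [interior_smul₀ hsne]
    refine ⟨0, ?_, smul_zero s⟩
    have hnegset : (-C : Set (EuclideanSpace ℝ (Fin n))) = ((-1 : ℝ)) • C := by
      ext x
      constructor
      · intro hx
        exact ⟨-x, Set.mem_neg.mp hx, by simp⟩
      · rintro ⟨y, hy, rfl⟩
        rw [Set.mem_neg]
        simpa using hy
    rw [hnegset, interior_smul₀ (by norm_num : (-1:ℝ) ≠ 0)]
    exact ⟨0, h0int, by simp⟩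
  -- Minkowski centered
  have hmcs : MinkCentered Cs := by
    rw [MinkCentered, hasym]
    exact hsub
  -- Cs ∩ -Cs = C ∩ -C
  have hKeq : Cs ∩ -Cs = C ∩ -C := by
    ext x
    constructor
    · rintro ⟨⟨h1, _⟩, h2⟩
      rw [Set.mem_neg] at h2
      exact ⟨h1, Set.mem_neg.mpr h2.1⟩
    · rintro ⟨h1, h2⟩
      rw [Set.mem_neg] at h2
      have hxs : x ∈ s • (-C) := by
        rw [hmemsC, neg_smul, ← smul_neg]
        exact hshrink _ (by positivity) (by rw [inv_le_one_iff₀]; right; linarith)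
          (-x) h2
      have hnxs : -x ∈ s • (-C) := by
        rw [hmemsC, neg_smul, ← smul_neg, neg_neg]
        exact hshrink _ (by positivity) (by rw [inv_le_one_iff₀]; right; linarith)
          x h1
      exact ⟨⟨h1, hxs⟩, Set.mem_neg.mpr ⟨h2, hnxs⟩⟩
  -- optimal containment
  have hopts : OptCont (Cs ∩ -Cs) (convexHull ℝ (Cs ∪ -Cs)) := by
    constructor
    · intro x hx
      exact subset_convexHull ℝ _ (Or.inl hx.1)
    · rintro ⟨ρ, hρ0, hρ1, t, ht⟩
      apply hopt.2
      refine ⟨ρ, hρ0, hρ1, t, ?_⟩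
      intro x hx
      rw [← hKeq] at hx
      have := ht hx
      have hmono : ρ • convexHull ℝ (Cs ∪ -Cs) + {t}
          ⊆ ρ • convexHull ℝ (C ∪ -C) + {t} := by
        apply Set.add_subset_add_right
        apply Set.smul_set_mono
        apply convexHull_mono
        exact Set.union_subset_union Set.inter_subset_left
          (Set.neg_subset_neg.mpr Set.inter_subset_left)
      exact hmono this
  exact ⟨Cs, hcomps, hconvs, hints, hmcs, hasym, hopts⟩
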